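/- Let f(σ) = aσ + bσ³ + cσ⁵ satisfy f(1) = 1 and f'(1) = 0, so that a = (3+2c)/2 and b = −(1+4c)/2. Then f'(σ) ≥ 0 for all σ ∈ [0,1] if and only if −3/2 ≤ c ≤ 3/8. -/

import Mathlib

/-- For an odd quintic `f(σ) = aσ + bσ³ + cσ⁵` with `f(1) = 1` and `f'(1) = 0`
(equivalently `a = (3+2c)/2` and `b = −(1+4c)/2`), the derivative is nonnegative
on `[0,1]` if and only if `−3/2 ≤ c ≤ 3/8`. -/
theorem promotion_monotone_iff (a b c : ℝ)
    (f : ℝ → ℝ) (hf : f = fun σ => a * σ + b * σ ^ 3 + c * σ ^ 5)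
    (h1 : f 1 = 1) (h2 : deriv f 1 = 0) :
    (∀ σ ∈ Set.Icc (0 : ℝ) 1, 0 ≤ deriv f σ) ↔ (-(3 / 2) ≤ c ∧ c ≤ 3 / 8) := by
  have hd : ∀ x : ℝ, HasDerivAt f (a + 3 * b * x ^ 2 + 5 * c * x ^ 4) x := by
    intro x
    rw [hf]
    have h := (((hasDerivAt_pow 1 x).const_mul a).add
      ((hasDerivAt_pow 3 x).const_mul b)).add ((hasDerivAt_pow 5 x).const_mul c)
    convert h using 2 <;> norm_num
    · rfl
    · rfl
    · ring
    · ring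
  have hD : ∀ x : ℝ, deriv f x = a + 3 * b * x ^ 2 + 5 * c * x ^ 4 :=
    fun x => (hd x).deriv
  have h1' : a + b + c = 1 := by have := h1; rw [hf] at this; simp at this; linarith
  have h2' : a + 3 * b + 5 * c = 0 := by rw [hD 1] at h2; linarith
  have ha : a = (3 + 2 * c) / 2 := by linarith
  have hb : b = -(1 + 4 * c) / 2 := by linarith
  subst ha hb
  constructor
  · intro h
    constructor
    · have h0 := h 0 ⟨le_refl _, by norm_num⟩
      rw [hD 0] at h0
      nlinarith
    · by_contra hc
      push_neg at hc
      have hcpos : (0 : ℝ) < c := by linarith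
      set u : ℝ := ((3 + 2 * c) / (10 * c) + 1) / 2 with hu
      have hu0 : 0 ≤ u := by positivity
      have hratio : (3 + 2 * c) / (10 * c) < 1 := by
        rw [div_lt_one (by linarith)]; linarith
      have hu1 : u < 1 := by rw [hu]; linarith
      have h5cu : (3 + 2 * c) / 2 - 5 * c * u < 0 := by
        have : 5 * c * u = ((3 + 2 * c) / 2 + 5 * c) / 2 := by
          rw [hu]; field_simp; ring
        rw [this]
        nlinarith
      set σ := Real.sqrt u with hσ
      have hσ0 : 0 ≤ σ := Real.sqrt_nonneg u
      have hσsq : σ ^ 2 = u := Real.sq_sqrt hu0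
      have hσ1 : σ ≤ 1 := by
        nlinarith [hσsq]
      have := h σ ⟨hσ0, hσ1⟩
      rw [hD σ] at this
      have hfac : (3 + 2 * c) / 2 + 3 * (-(1 + 4 * c) / 2) * σ ^ 2 + 5 * c * σ ^ 4
          = (1 - u) * ((3 + 2 * c) / 2 - 5 * c * u) := by
        rw [← hσsq]; ring
      rw [hfac] at this
      nlinarith
  · rintro ⟨hc1, hc2⟩ σ ⟨hσ0, hσ1⟩
    rw [hD σ]
    have h1σ : 0 ≤ 1 - σ ^ 2 := by nlinarith
    have h2σ : 0 ≤ (3 + 2 * c) / 2 - 5 * c * σ ^ 2 := by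
      rcases le_or_gt 0 c with hc | hc
      · nlinarith
      · nlinarith
    nlinarith [mul_nonneg h1σ h2σ]
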